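/- Let {|x⟩} be an orthonormal basis and suppose two probability distributions p and q satisfy ‖Σ_x p_x |x⟩⟨x| - Σ_x q_x |x⟩⟨x|‖₁ ≤ ε. Then the pure states |ψ⟩ = Σ_x √p_x |x⟩ and |φ⟩ = Σ_x √q_x |x⟩ satisfy ‖ |ψ⟩⟨ψ| - |φ⟩⟨φ| ‖₁ ≤ 2√ε. -/

import Mathlib

open scoped Matrix Kronecker ComplexOrder

noncomputable section

noncomputable def traceNorm {n : Type*} [Fintype n] [DecidableEq n] (A : Matrix n n ℂ) : ℝ :=
  (((Matrix.posSemidef_conjTranspose_mul_self A).isHermitian.eigenvectorUnitary.1 *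
    Matrix.diagonal (((↑) : ℝ → ℂ) ∘ (√·) ∘ (Matrix.posSemidef_conjTranspose_mul_self A).isHermitian.eigenvalues) *
    (star (Matrix.posSemidef_conjTranspose_mul_self A).isHermitian.eigenvectorUnitary :
      Matrix n n ℂ)).trace).re

noncomputable def vnEntropy {n : Type*} [Fintype n] [DecidableEq n] (ρ : Matrix n n ℂ) : ℝ :=
  if h : ρ.IsHermitian then -∑ i, (h.eigenvalues i * Real.log (h.eigenvalues i)) else 0

def ptraceL {a b : Type*} [Fintype a] (M : Matrix (a × b) (a × b) ℂ) : Matrix b b ℂ :=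
  Matrix.of fun i j => ∑ k : a, M (k, i) (k, j)

def ptraceR {a b : Type*} [Fintype b] (M : Matrix (a × b) (a × b) ℂ) : Matrix a a ℂ :=
  Matrix.of fun i j => ∑ k : b, M (i, k) (j, k)

def ptrace3M {a b c : Type*} [Fintype b] (M : Matrix (a × b × c) (a × b × c) ℂ) :
    Matrix (a × c) (a × c) ℂ :=
  Matrix.of fun i j => ∑ k : b, M (i.1, k, i.2) (j.1, k, j.2)

open scoped Classical in
noncomputable def msqrt {n : Type*} [Fintype n] [DecidableEq n] (A : Matrix n n ℂ) :
    Matrix n n ℂ :=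
  if h : A.PosSemidef then h.isHermitian.eigenvectorUnitary.1 *
    Matrix.diagonal (((↑) : ℝ → ℂ) ∘ (√·) ∘ h.isHermitian.eigenvalues) *
    (star h.isHermitian.eigenvectorUnitary : Matrix n n ℂ) else 0

noncomputable def fidelity {n : Type*} [Fintype n] [DecidableEq n] (ρ σ : Matrix n n ℂ) : ℝ :=
  (((msqrt (msqrt σ * ρ * msqrt σ)).trace).re) ^ 2

def outer {n : Type*} (v : n → ℂ) : Matrix n n ℂ :=
  Matrix.of fun i j => v i * (starRingEnd ℂ) (v j)

def krausApply {ι a b : Type*} [Fintype ι] [Fintype a]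
    (K : ι → Matrix b a ℂ) (ρ : Matrix a a ℂ) : Matrix b b ℂ :=
  ∑ i, K i * ρ * (K i)ᴴ

open MatrixOrder in
lemma traceNorm_eq_of {n : Type*} [Fintype n] [DecidableEq n] {A B : Matrix n n ℂ}
    (hB : B.PosSemidef) (h : B ^ 2 = Aᴴ * A) : traceNorm A = B.trace.re := by
  unfold traceNorm
  have hH := (Matrix.posSemidef_conjTranspose_mul_self A).isHermitian
  have hc := hH.cfc_eq Real.sqrt
  rw [Matrix.IsHermitian.cfc, Unitary.conjStarAlgAut_apply] at hc
  have hcB : cfc Real.sqrt (Aᴴ * A) = B := by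
    rw [← h, ← cfc_comp_pow (f := Real.sqrt) (n := 2) (a := B) (ha := hB.isHermitian.isSelfAdjoint)]
    have h0 : (0:Matrix n n ℂ) ≤ B := hB.nonneg
    conv_rhs => rw [← cfc_id' ℝ B hB.isHermitian.isSelfAdjoint]
    refine cfc_congr fun x hx => ?_
    exact Real.sqrt_sq (spectrum_nonneg_of_nonneg h0 hx)
  rw [← hcB, hc]
  rfl

def ovec {n : Type*} (u v : n → ℂ) : Matrix n n ℂ :=
  Matrix.of fun i j => u i * (starRingEnd ℂ) (v j)

lemma ovec_mul {n : Type*} [Fintype n] (a b c d : n → ℂ) :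
    ovec a b * ovec c d = (∑ k, (starRingEnd ℂ) (b k) * c k) • ovec a d := by
  ext i j
  simp only [ovec, Matrix.mul_apply, Matrix.smul_apply, Matrix.of_apply, smul_eq_mul,
    Finset.sum_mul]
  exact Finset.sum_congr rfl fun k _ => by ring

lemma ovec_conjTranspose {n : Type*} (a b : n → ℂ) : (ovec a b)ᴴ = ovec b a := by
  ext i j
  simp [ovec, Matrix.conjTranspose_apply, mul_comm]

lemma smul_posSemidef {n : Type*} [Fintype n] {r : ℝ} (hr : 0 ≤ r) {A : Matrix n n ℂ}
    (hA : A.PosSemidef) : ((r : ℂ) • A).PosSemidef := by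
  refine ⟨?_, fun x => ?_⟩
  · have := hA.1
    unfold Matrix.IsHermitian at *
    rw [Matrix.conjTranspose_smul, this]
    congr 1
    simp [Complex.conj_ofReal]
  · have h1 := hA.2 x
    exact (hA.smul (a := (r : ℂ)) (by exact_mod_cast Complex.zero_le_real.mpr hr)).2 x

lemma traceNorm_diag_sub {X : Type*} [Fintype X] [DecidableEq X] (p q : X → ℝ) :
    traceNorm (Matrix.diagonal (fun x => (p x : ℂ)) - Matrix.diagonal (fun x => (q x : ℂ)))
      = ∑ x, |p x - q x| := by
  have hA : Matrix.diagonal (fun x => (p x : ℂ)) - Matrix.diagonal (fun x => (q x : ℂ))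
      = Matrix.diagonal (fun x => ((p x - q x : ℝ) : ℂ)) := by
    rw [Matrix.diagonal_sub]; push_cast; rfl
  have hPSD : (Matrix.diagonal fun x => ((|p x - q x| : ℝ) : ℂ)).PosSemidef :=
    Matrix.PosSemidef.diagonal fun i => Complex.zero_le_real.mpr (abs_nonneg _)
  have hsq : (Matrix.diagonal fun x => ((|p x - q x| : ℝ) : ℂ)) ^ 2
      = (Matrix.diagonal (fun x => ((p x - q x : ℝ) : ℂ)))ᴴ
        * Matrix.diagonal (fun x => ((p x - q x : ℝ) : ℂ)) := by
    simp only [pow_two, Matrix.diagonal_conjTranspose, Matrix.diagonal_mul_diagonal]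
    have hfg : ∀ f g : X → ℂ, f = g → Matrix.diagonal f = Matrix.diagonal g :=
      fun f g h => by rw [h]
    apply hfg
    funext x
    simp only [Pi.star_apply, RCLike.star_def, Complex.conj_ofReal,
      ← Complex.ofReal_mul, abs_mul_abs_self]
  rw [hA, traceNorm_eq_of hPSD hsq]
  simp [Matrix.trace_diagonal, Complex.re_sum]
theorem close_distributions_close_superpositions {X : Type*} [Fintype X] [DecidableEq X]
    (ε : ℝ) (p q : X → ℝ) (hp : ∀ x, 0 ≤ p x) (hp1 : ∑ x, p x = 1)
    (hq : ∀ x, 0 ≤ q x) (hq1 : ∑ x, q x = 1)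
    (hclose : traceNorm (Matrix.diagonal (fun x => (p x : ℂ))
        - Matrix.diagonal (fun x => (q x : ℂ))) ≤ ε) :
    traceNorm (outer (fun x => (Real.sqrt (p x) : ℂ)) - outer (fun x => (Real.sqrt (q x) : ℂ)))
      ≤ 2 * Real.sqrt ε := by
  set u : X → ℂ := fun x => (Real.sqrt (p x) : ℂ) with hu_def
  set v : X → ℂ := fun x => (Real.sqrt (q x) : ℂ) with hv_def
  set c : ℝ := ∑ x, Real.sqrt (p x) * Real.sqrt (q x) with hc_def
  have hsum_le : ∑ x, |p x - q x| ≤ ε := by rw [← traceNorm_diag_sub]; exact hclose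
  have hε0 : 0 ≤ ε := le_trans (Finset.sum_nonneg fun x _ => abs_nonneg _) hsum_le
  have hc0 : 0 ≤ c :=
    Finset.sum_nonneg fun x _ => mul_nonneg (Real.sqrt_nonneg _) (Real.sqrt_nonneg _)
  have hkey : 2 - 2 * c = ∑ x, (Real.sqrt (p x) - Real.sqrt (q x)) ^ 2 := by
    have hterm : ∀ x, (Real.sqrt (p x) - Real.sqrt (q x)) ^ 2
        = p x + q x - 2 * (Real.sqrt (p x) * Real.sqrt (q x)) := by
      intro x
      have := Real.sq_sqrt (hp x)
      have := Real.sq_sqrt (hq x)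
      nlinarith
    simp_rw [hterm]
    rw [Finset.sum_sub_distrib, Finset.sum_add_distrib, hp1, hq1, ← Finset.mul_sum, ← hc_def]
    ring
  have hterm2 : ∀ x, (Real.sqrt (p x) - Real.sqrt (q x)) ^ 2 ≤ |p x - q x| := by
    intro x
    rcases le_total (q x) (p x) with h | h
    · have habs : |p x - q x| = p x - q x := abs_of_nonneg (by linarith)
      have hab : Real.sqrt (q x) ≤ Real.sqrt (p x) := Real.sqrt_le_sqrt h
      nlinarith [Real.sq_sqrt (hp x), Real.sq_sqrt (hq x), Real.sqrt_nonneg (q x),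
        mul_nonneg (Real.sqrt_nonneg (q x)) (sub_nonneg.mpr hab)]
    · have habs : |p x - q x| = q x - p x := by rw [abs_sub_comm]; exact abs_of_nonneg (by linarith)
      have hab : Real.sqrt (p x) ≤ Real.sqrt (q x) := Real.sqrt_le_sqrt h
      nlinarith [Real.sq_sqrt (hp x), Real.sq_sqrt (hq x), Real.sqrt_nonneg (p x),
        mul_nonneg (Real.sqrt_nonneg (p x)) (sub_nonneg.mpr hab)]
  have hSsum : 2 - 2 * c ≤ ε := by
    rw [hkey]
    exact le_trans (Finset.sum_le_sum fun x _ => hterm2 x) hsum_le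
  have hc1 : c ≤ 1 := by
    have : 0 ≤ ∑ x, (Real.sqrt (p x) - Real.sqrt (q x)) ^ 2 :=
      Finset.sum_nonneg fun x _ => sq_nonneg _
    nlinarith [hkey]
  -- complex inner products
  have hiu : ∑ k, (starRingEnd ℂ) (u k) * u k = 1 := by
    have h1 : ∀ k, (starRingEnd ℂ) (u k) * u k = ((p k : ℝ) : ℂ) := by
      intro k
      simp only [hu_def, Complex.conj_ofReal]
      rw [← Complex.ofReal_mul, Real.mul_self_sqrt (hp k)]
    rw [Finset.sum_congr rfl fun k _ => h1 k, ← Complex.ofReal_sum, hp1, Complex.ofReal_one]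
  have hiv : ∑ k, (starRingEnd ℂ) (v k) * v k = 1 := by
    have h1 : ∀ k, (starRingEnd ℂ) (v k) * v k = ((q k : ℝ) : ℂ) := by
      intro k
      simp only [hv_def, Complex.conj_ofReal]
      rw [← Complex.ofReal_mul, Real.mul_self_sqrt (hq k)]
    rw [Finset.sum_congr rfl fun k _ => h1 k, ← Complex.ofReal_sum, hq1, Complex.ofReal_one]
  have hiuv : ∑ k, (starRingEnd ℂ) (u k) * v k = ((c : ℝ) : ℂ) := by
    have h1 : ∀ k, (starRingEnd ℂ) (u k) * v k
        = ((Real.sqrt (p k) * Real.sqrt (q k) : ℝ) : ℂ) := by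
      intro k
      simp only [hu_def, hv_def, Complex.conj_ofReal]
      rw [← Complex.ofReal_mul]
    rw [Finset.sum_congr rfl fun k _ => h1 k, ← Complex.ofReal_sum, ← hc_def]
  have hivu : ∑ k, (starRingEnd ℂ) (v k) * u k = ((c : ℝ) : ℂ) := by
    have h1 : ∀ k, (starRingEnd ℂ) (v k) * u k
        = ((Real.sqrt (p k) * Real.sqrt (q k) : ℝ) : ℂ) := by
      intro k
      simp only [hu_def, hv_def, Complex.conj_ofReal]
      rw [← Complex.ofReal_mul, mul_comm]
    rw [Finset.sum_congr rfl fun k _ => h1 k, ← Complex.ofReal_sum, ← hc_def]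
  have hgoal : outer u - outer v = ovec u u - ovec v v := rfl
  rw [hgoal]
  by_cases hceq : c = 1
  · -- degenerate case: p = q pointwise in sqrt, difference is zero
    have hs0 : ∑ x, (Real.sqrt (p x) - Real.sqrt (q x)) ^ 2 = 0 := by
      rw [← hkey, hceq]; ring
    have hzero : ∀ x, Real.sqrt (p x) = Real.sqrt (q x) := by
      intro x
      have h := (Finset.sum_eq_zero_iff_of_nonneg fun i _ => sq_nonneg _).1 hs0 x
        (Finset.mem_univ x)
      have := sq_eq_zero_iff.mp h
      linarith [this]
    have huv2 : u = v := by
      funext x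
      simp only [hu_def, hv_def, hzero x]
    rw [huv2, sub_self]
    have h0 : traceNorm (0 : Matrix X X ℂ) = 0 := by
      rw [traceNorm_eq_of (B := (0 : Matrix X X ℂ)) Matrix.PosSemidef.zero (by simp)]
      simp
    rw [h0]
    positivity
  · have hclt : c < 1 := lt_of_le_of_ne hc1 hceq
    set s : ℝ := Real.sqrt (1 - c ^ 2) with hs_def
    have h1c2 : 0 < 1 - c ^ 2 := by nlinarith
    have hs2 : s ^ 2 = 1 - c ^ 2 := Real.sq_sqrt h1c2.le
    have hspos : 0 < s := Real.sqrt_pos.mpr h1c2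
    set D : Matrix X X ℂ := ovec u u - ovec v v with hD_def
    have hDh : Dᴴ = D := by
      rw [hD_def, Matrix.conjTranspose_sub, ovec_conjTranspose, ovec_conjTranspose]
    have hD2 : D * D = ovec u u + ovec v v
        - ((c : ℝ) : ℂ) • ovec u v - ((c : ℝ) : ℂ) • ovec v u := by
      simp only [hD_def, sub_mul, mul_sub, ovec_mul, hiu, hiv, hiuv, hivu, one_smul]
      abel
    have hD3 : D * (D * D) = (((1 - c ^ 2 : ℝ)) : ℂ) • D := by
      rw [hD2]
      simp only [hD_def, sub_mul, mul_sub, mul_add, add_mul, Matrix.mul_smul, ovec_mul,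
        hiu, hiv, hiuv, hivu, one_smul]
      push_cast
      module
    have hPSDDD : (D * D).PosSemidef := by
      have h := Matrix.posSemidef_conjTranspose_mul_self D
      rwa [hDh] at h
    have hM : (((s⁻¹ : ℝ) : ℂ) • (D * D)).PosSemidef :=
      smul_posSemidef (inv_nonneg.mpr hspos.le) hPSDDD
    have hscal : ((s⁻¹ : ℝ) : ℂ) * ((s⁻¹ : ℝ) : ℂ) * (((1 - c ^ 2 : ℝ)) : ℂ) = 1 := by
      rw [← Complex.ofReal_mul, ← Complex.ofReal_mul, ← hs2]
      norm_cast
      field_simp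
    have hMsq : (((s⁻¹ : ℝ) : ℂ) • (D * D)) ^ 2 = Dᴴ * D := by
      rw [hDh, pow_two, Matrix.smul_mul, Matrix.mul_smul, smul_smul,
        mul_assoc D D (D * D), hD3, Matrix.mul_smul, smul_smul, hscal, one_smul]
    have trov : ∀ a b : X → ℂ,
        (ovec a b).trace = ∑ k, (starRingEnd ℂ) (b k) * a k := by
      intro a b
      simp only [Matrix.trace, Matrix.diag, ovec, Matrix.of_apply]
      exact Finset.sum_congr rfl fun k _ => by ring
    have htr : ((((s⁻¹ : ℝ) : ℂ) • (D * D)).trace).re = 2 * s := by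
      rw [Matrix.trace_smul, hD2, Matrix.trace_sub, Matrix.trace_sub, Matrix.trace_add,
        Matrix.trace_smul, Matrix.trace_smul, trov, trov, trov, trov, hiu, hiv, hiuv, hivu]
      have heq : ((s⁻¹ : ℝ) : ℂ) • ((1 : ℂ) + 1 - ((c : ℝ) : ℂ) • ((c : ℝ) : ℂ)
          - ((c : ℝ) : ℂ) • ((c : ℝ) : ℂ)) = ((s⁻¹ * (2 - 2 * c ^ 2) : ℝ) : ℂ) := by
        push_cast
        simp only [smul_eq_mul]
        ring
      rw [heq, Complex.ofReal_re]
      have h2 : 2 - 2 * c ^ 2 = 2 * s ^ 2 := by rw [hs2]; ring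
      have hne : s ≠ 0 := hspos.ne'
      rw [h2]
      field_simp
    rw [traceNorm_eq_of hM hMsq, htr]
    have hle : 1 - c ^ 2 ≤ ε := by nlinarith [sq_nonneg (1 - c)]
    have hsle : s ≤ Real.sqrt ε := Real.sqrt_le_sqrt hle
    linarith
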